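/- Let α > 0 and let h_α(n) = ⌊αn + 1/2⌋ and h_{1/α}(n) = ⌊n/α + 1/2⌋. Suppose p and q are ultrafilters on ℕ lying in Z_α, i.e. the limit of n ↦ αn mod 1 along each of them is 0 in ℝ/ℤ. Then: (i) the pushforward h̃_α(p) = {A : h_α⁻¹[A] ∈ p} lies in Z_{1/α}; (ii) h̃_{1/α}(h̃_α(p)) = p; and (iii) h̃_α(p + q) = h̃_α(p) + h̃_α(q). -/

import Mathlib

/-- `h_α(n) = ⌊α n + 1/2⌋`, the nearest integer to `α n`. -/
noncomputable def nearestMap (α : ℝ) (n : ℕ) : ℕ := ⌊α * n + 1/2⌋₊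

/-- `f_α : ℕ → ℝ/ℤ`, `f_α(n) = α n mod 1`. -/
noncomputable def circMap (α : ℝ) (n : ℕ) : UnitAddCircle := ((α * n : ℝ) : UnitAddCircle)

/-- The ultrafilter sum: `A ∈ usum p q ↔ {x : {y : x + y ∈ A} ∈ q} ∈ p`. -/
def usum (p q : Ultrafilter ℕ) : Ultrafilter ℕ :=
  p.bind fun x => q.map fun y => x + y

lemma mem_usum (r s : Ultrafilter ℕ) (A : Set ℕ) :
    A ∈ usum r s ↔ {m | {n | m + n ∈ A} ∈ s} ∈ r := Iff.rfl

lemma nearestMap_cast (α : ℝ) (hα : 0 < α) (n : ℕ) :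
    (nearestMap α n : ℝ) = round (α * n) := by
  have h0 : (0:ℝ) ≤ α * n + 1/2 := by positivity
  rw [nearestMap, natCast_floor_eq_intCast_floor h0, round_eq]

lemma norm_circMap (α : ℝ) (hα : 0 < α) (n : ℕ) :
    ‖circMap α n‖ = |α * n - nearestMap α n| := by
  rw [circMap, UnitAddCircle.norm_eq, nearestMap_cast α hα]

lemma eventually_small (α : ℝ) (hα : 0 < α) (p : Ultrafilter ℕ)
    (hp : Filter.Tendsto (circMap α) (p : Filter ℕ) (nhds 0)) {δ : ℝ} (hδ : 0 < δ) :
    ∀ᶠ n in (p : Filter ℕ), |α * n - nearestMap α n| < δ := by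
  have h1 := tendsto_zero_iff_norm_tendsto_zero.mp hp
  filter_upwards [h1.eventually_lt_const hδ] with n hn
  rwa [norm_circMap α hα] at hn

theorem nearestMap_iso_on_Z_alpha (α : ℝ) (hα : 0 < α) (p q : Ultrafilter ℕ)
    (hp : Filter.Tendsto (circMap α) (p : Filter ℕ) (nhds 0))
    (hq : Filter.Tendsto (circMap α) (q : Filter ℕ) (nhds 0)) :
    Filter.Tendsto (circMap (1/α)) ((Ultrafilter.map (nearestMap α) p : Ultrafilter ℕ) : Filter ℕ)
        (nhds 0) ∧
    Ultrafilter.map (nearestMap (1/α)) (Ultrafilter.map (nearestMap α) p) = p ∧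
    Ultrafilter.map (nearestMap α) (usum p q) =
      usum (Ultrafilter.map (nearestMap α) p) (Ultrafilter.map (nearestMap α) q) := by
  set h := nearestMap α with hh
  have hε : Filter.Tendsto (fun n => α * n - h n) (p : Filter ℕ) (nhds 0) := by
    rw [tendsto_zero_iff_norm_tendsto_zero]
    exact (tendsto_zero_iff_norm_tendsto_zero.mp hp).congr fun n => by
      rw [norm_circMap α hα, Real.norm_eq_abs]
  -- key rewriting of circMap (1/α) ∘ h
  have hcirc : ∀ n : ℕ, circMap (1/α) (h n) = ((((h n : ℝ) - α * n) / α : ℝ) : UnitAddCircle) := by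
    intro n
    rw [circMap]
    rw [← sub_eq_zero, ← QuotientAddGroup.mk_sub, AddCircle.coe_eq_zero_iff]
    refine ⟨n, ?_⟩
    have : 1/α * (h n : ℝ) - ((h n : ℝ) - α * n) / α = n := by
      field_simp; ring
    simp only [zsmul_eq_mul, mul_one, Int.cast_natCast, ← one_div]
    exact this.symm
  refine ⟨?_, ?_, ?_⟩
  · -- part (i)
    rw [Ultrafilter.coe_map, Filter.tendsto_map'_iff]
    have h2 : Filter.Tendsto (fun n => ((h n : ℝ) - α * n) / α) (p : Filter ℕ) (nhds 0) := by
      have := (hε.neg).div_const α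
      simpa [neg_sub] using this
    have h3 : Filter.Tendsto (fun x : ℝ => (x : UnitAddCircle)) (nhds 0) (nhds 0) := by
      simpa using (AddCircle.continuous_mk' (1:ℝ)).tendsto 0
    exact (h3.comp h2).congr fun n => (hcirc n).symm
  · -- part (ii)
    apply Ultrafilter.coe_injective
    rw [Ultrafilter.coe_map, Ultrafilter.coe_map, Filter.map_map]
    have key : ∀ᶠ n in (p : Filter ℕ), (nearestMap (1/α) ∘ h) n = id n := by
      filter_upwards [eventually_small α hα p hp (by positivity : (0:ℝ) < α/2)] with n hn
      have hα' : (0:ℝ) < 1/α := by positivity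
      simp only [Function.comp_apply, id_eq, nearestMap]
      have hval : 1/α * (h n : ℝ) + 1/2 = n + (1/2 - (α * n - h n) / α) := by
        field_simp; ring
      have hb1 : (α * n - h n) / α < 1/2 := by
        rw [div_lt_iff₀ hα]; calc α * n - h n ≤ |α * n - h n| := le_abs_self _
          _ < α/2 := hn
          _ = 1/2 * α := by ring
      have hb2 : -(1/2) < (α * n - h n) / α := by
        rw [lt_div_iff₀ hα]
        have := neg_abs_le (α * n - (h n : ℝ))
        nlinarith [hn]
      rw [hval, Nat.floor_eq_iff (by nlinarith [Nat.cast_nonneg (α := ℝ) n])]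
      constructor <;> nlinarith
    rw [Filter.map_congr key, Filter.map_id]
  · -- part (iii)
    have hadd : ∀ m n : ℕ, |α * m - h m| < 1/4 → |α * n - h n| < 1/4 →
        h (m + n) = h m + h n := by
      intro m n hm hn
      have habs1 := abs_lt.mp hm
      have habs2 := abs_lt.mp hn
      rw [hh, nearestMap]
      have hc : (α * (m + n : ℕ) : ℝ) + 1/2
          = ((h m + h n : ℕ) : ℝ) + ((α * m - h m) + (α * n - h n) + 1/2) := by
        push_cast; ring
      rw [Nat.floor_eq_iff (by nlinarith [Nat.cast_nonneg (α := ℝ) (h m + h n)])]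
      constructor <;> nlinarith
    ext A
    rw [Ultrafilter.mem_map, mem_usum, mem_usum, Ultrafilter.mem_map]
    have hFp := eventually_small α hα p hp (by norm_num : (0:ℝ) < 1/4)
    have hFq := eventually_small α hα q hq (by norm_num : (0:ℝ) < 1/4)
    have hmapq : (h ⁻¹' {m' | {n' | m' + n' ∈ A} ∈ Ultrafilter.map h q} : Set ℕ)
        = {m | {n | h m + h n ∈ A} ∈ q} := rfl
    rw [hmapq]
    have step : ∀ᶠ m in (p : Filter ℕ),
        ({n | h (m + n) ∈ A} ∈ q ↔ {n | h m + h n ∈ A} ∈ q) := by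
      filter_upwards [hFp] with m hm
      refine Filter.eventually_congr ?_
      filter_upwards [hFq] with n hn
      rw [hadd m n hm hn]
    exact Filter.eventually_congr step
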